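/- Fix integers n ≥ 3, m with 3 ≤ m ≤ n, and k ≥ 1; set r = n - m + 2 and t = ⌈(k+1)/r⌉. Define a graph G on [t] × Z_n by joining (a,b) and (a',b') whenever a < a' and b' - b ∈ {0, 1, ..., r-1} (mod n), or a' < a and b - b' ∈ {0,1,...,r-1} (mod n). Then G is r(t-1)-regular (hence has maximum degree ≤ k), each column {a} × Z_n is an independent n-set, and every independent set of size m in G is contained in a single column. Consequently, taking m-1 copies of each column yields t(m-1) independent n-sets with no rainbow independent m-set, so f_{D(k)}(n,m) ≥ ⌈(k+1)/(n-m+2)⌉(m-1) + 1. -/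

import Mathlib

open SimpleGraph Finset

/-- `S` is an independent set in `G`. -/
def IndepIn {V : Type*} (G : SimpleGraph V) (S : Finset V) : Prop :=
  ∀ u ∈ S, ∀ v ∈ S, ¬ G.Adj u v

/-- The family `I` admits a rainbow independent `m`-set in `G`: `m` distinct pairwise
non-adjacent vertices, each chosen from a distinct member of the family. -/
def HasRainbowIndep {V ι : Type*} (G : SimpleGraph V) (I : ι → Finset V) (m : ℕ) : Prop :=
  ∃ (j : Fin m → ι) (v : Fin m → V), Function.Injective j ∧ Function.Injective v ∧
    (∀ i, v i ∈ I (j i)) ∧ ∀ i i' : Fin m, i ≠ i' → ¬ G.Adj (v i) (v i')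

/-- `G` contains no induced copy of `H`. -/
def IndFree {V W : Type*} (G : SimpleGraph V) (H : SimpleGraph W) : Prop :=
  ¬ ∃ f : W ↪ V, ∀ a b : W, G.Adj (f a) (f b) ↔ H.Adj a b

/-- The repeating graph on `Fin t × ZMod n`: `(a,b)` and `(a',b')` are joined whenever
`a < a'` and `b' - b ∈ {0, 1, ..., r-1}` (mod `n`), or symmetrically. -/
def Gcol (t r n : ℕ) : SimpleGraph (Fin t × ZMod n) where
  Adj p q :=
    (p.1 < q.1 ∧ ∃ i : ℕ, i < r ∧ q.2 - p.2 = (i : ZMod n)) ∨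
    (q.1 < p.1 ∧ ∃ i : ℕ, i < r ∧ p.2 - q.2 = (i : ZMod n))
  symm := ⟨fun p q h => Or.symm h⟩
  loopless := ⟨fun p h => by
    rcases h with ⟨h, -⟩ | ⟨h, -⟩ <;> exact lt_irrefl _ h⟩

/-- The column `{a} × ZMod n` as a finset. -/
def column (t : ℕ) (n : ℕ) [NeZero n] (a : Fin t) : Finset (Fin t × ZMod n) :=
  Finset.univ.image fun b : ZMod n => (a, b)

lemma gcol_cross_val {t r n : ℕ} [NeZero n] {S : Finset (Fin t × ZMod n)}
    (hS : IndepIn (Gcol t r n) S) {p q : Fin t × ZMod n}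
    (hp : p ∈ S) (hq : q ∈ S) (hlt : p.1 < q.1) : r ≤ (q.2 - p.2).val := by
  by_contra hcon
  push_neg at hcon
  exact hS p hp q hq (Or.inl ⟨hlt, (q.2 - p.2).val, hcon,
    (ZMod.natCast_rightInverse (q.2 - p.2)).symm⟩)

theorem bounded_degree_lower_construction (n m k r t : ℕ) [NeZero n]
    (hn : 3 ≤ n) (hm : 3 ≤ m) (hmn : m ≤ n) (hk : 1 ≤ k)
    (hr : r = n - m + 2) (ht : t = (k + r) / r) :
    (∀ p : Fin t × ZMod n, Nat.card ((Gcol t r n).neighborSet p) = r * (t - 1)) ∧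
    r * (t - 1) ≤ k ∧
    (∀ a : Fin t, (column t n a).card = n ∧ IndepIn (Gcol t r n) (column t n a)) ∧
    (∀ S : Finset (Fin t × ZMod n), IndepIn (Gcol t r n) S → S.card = m →
      ∃ a : Fin t, ∀ p ∈ S, p.1 = a) ∧
    ¬ HasRainbowIndep (Gcol t r n)
        (fun x : Fin t × Fin (m - 1) => column t n x.1) m := by
  classical
  have hn0 : 0 < n := Nat.pos_of_ne_zero (NeZero.ne n)
  have hr2 : 2 ≤ r := by omega
  have hrltn : r < n := by omega
  have hnr : n - r = m - 2 := by omega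
  have cast_val : ∀ a : ZMod n, ((a.val : ℕ) : ZMod n) = a :=
    fun a => ZMod.natCast_rightInverse a
  -- distinct second coordinates in an independent set
  have snd_inj : ∀ S : Finset (Fin t × ZMod n), IndepIn (Gcol t r n) S →
      ∀ p ∈ S, ∀ q ∈ S, p.2 = q.2 → p = q := by
    intro S hS p hp q hq h2
    by_contra hne
    have h1 : p.1 ≠ q.1 := fun h => hne (Prod.ext h h2)
    rcases lt_or_gt_of_ne h1 with hlt | hlt
    · have hh := gcol_cross_val hS hp hq hlt
      rw [h2, sub_self, ZMod.val_zero] at hh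
      omega
    · have hh := gcol_cross_val hS hq hp hlt
      rw [h2, sub_self, ZMod.val_zero] at hh
      omega
  -- flipped difference bound
  have hval_flip : ∀ S : Finset (Fin t × ZMod n), IndepIn (Gcol t r n) S →
      ∀ x ∈ S, ∀ y ∈ S, x.1 < y.1 → (x.2 - y.2).val ≤ n - r := by
    intro S hS x hx y hy hlt
    have h1 := gcol_cross_val hS hx hy hlt
    have hne0 : y.2 - x.2 ≠ 0 := by
      intro h; rw [h, ZMod.val_zero] at h1; omega
    have hxy : x.2 - y.2 = -(y.2 - x.2) := by ring
    rw [hxy, ZMod.neg_val, if_neg hne0]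
    omega
  -- part 4
  have key : ∀ S : Finset (Fin t × ZMod n), IndepIn (Gcol t r n) S → S.card = m →
      ∃ a : Fin t, ∀ p ∈ S, p.1 = a := by
    intro S hS hcard
    by_contra hcon
    push_neg at hcon
    have hSne : S.Nonempty := by rw [← Finset.card_pos, hcard]; omega
    obtain ⟨p0, hp0, hmax⟩ := S.exists_max_image Prod.fst hSne
    obtain ⟨q1, hq1S, hq1ne⟩ := hcon p0.1
    have hQne : (S.filter (fun q => q.1 ≠ p0.1)).Nonempty :=
      ⟨q1, Finset.mem_filter.2 ⟨hq1S, hq1ne⟩⟩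
    obtain ⟨qs, hqs, hqsmax⟩ :=
      (S.filter (fun q => q.1 ≠ p0.1)).exists_max_image (fun q => (q.2 - p0.2).val) hQne
    have hqsS : qs ∈ S := (Finset.mem_filter.1 hqs).1
    have hqslt : qs.1 < p0.1 :=
      lt_of_le_of_ne (hmax qs hqsS) (Finset.mem_filter.1 hqs).2
    have hqsub : (qs.2 - p0.2).val ≤ n - r := hval_flip S hS qs hqsS p0 hp0 hqslt
    -- every element of S is within n - r below qs.2
    have hδ : ∀ s ∈ S, (qs.2 - s.2).val ≤ n - r := by
      intro s hs
      by_cases h1 : s.1 = p0.1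
      · have hlt : qs.1 < s.1 := by rw [h1]; exact hqslt
        exact hval_flip S hS qs hqsS s hs hlt
      · have hsQ : s ∈ S.filter (fun q => q.1 ≠ p0.1) := Finset.mem_filter.2 ⟨hs, h1⟩
        have hle : (s.2 - p0.2).val ≤ (qs.2 - p0.2).val := hqsmax s hsQ
        have heq : qs.2 - s.2 = (((qs.2 - p0.2).val - (s.2 - p0.2).val : ℕ) : ZMod n) := by
          rw [Nat.cast_sub hle, cast_val, cast_val]; ring
        rw [heq, ZMod.val_cast_of_lt (by have := ZMod.val_lt (qs.2 - p0.2); omega)]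
        omega
    have hinj : Set.InjOn (fun s : Fin t × ZMod n => (qs.2 - s.2).val) ↑S := by
      intro x hx y hy hxy
      apply snd_inj S hS x hx y hy
      have heq2 : qs.2 - x.2 = qs.2 - y.2 := by
        rw [← cast_val (qs.2 - x.2), ← cast_val (qs.2 - y.2)]
        simp only at hxy
        rw [hxy]
      linear_combination -heq2
    have hle2 : S.card ≤ (Finset.range (n - r + 1)).card := by
      apply Finset.card_le_card_of_injOn _ _ hinj
      intro s hs
      exact Finset.mem_range.2 (by have := hδ s hs; show (qs.2 - s.2).val < n - r + 1; omega)
    rw [hcard, Finset.card_range] at hle2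
    omega
  refine ⟨?_, ?_, ?_, key, ?_⟩
  -- part 1 : regularity
  · intro p
    set f : Fin t × ℕ → Fin t × ZMod n :=
      fun x => (x.1, if p.1 < x.1 then p.2 + (x.2 : ZMod n) else p.2 - (x.2 : ZMod n)) with hf
    set D : Finset (Fin t × ℕ) := (Finset.univ.erase p.1) ×ˢ Finset.range r with hD
    have hDinj : Set.InjOn f ↑D := by
      intro x hx y hy hxy
      simp only [hD, Finset.coe_product, Set.mem_prod, Finset.mem_coe, Finset.mem_erase,
        Finset.coe_range, Set.mem_Iio] at hx hy
      simp only [hf, Prod.ext_iff] at hxy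
      obtain ⟨h1, h2⟩ := hxy
      rw [h1] at h2
      have h3 : (x.2 : ZMod n) = (y.2 : ZMod n) := by
        by_cases hc : p.1 < y.1
        · rw [if_pos hc, if_pos hc] at h2; exact add_left_cancel h2
        · rw [if_neg hc, if_neg hc] at h2
          have := sub_right_injective h2; exact this
      have h4 : x.2 = y.2 := by
        have hx2 := ZMod.val_cast_of_lt (show x.2 < n by omega)
        have hy2 := ZMod.val_cast_of_lt (show y.2 < n by omega)
        rw [← hx2, ← hy2, h3]
      exact Prod.ext h1 h4
    have hset : (Gcol t r n).neighborSet p = ↑(D.image f) := by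
      ext q
      simp only [SimpleGraph.mem_neighborSet, Finset.coe_image, Set.mem_image,
        Finset.mem_coe, hD, Finset.mem_product, Finset.mem_erase, Finset.mem_range,
        Finset.mem_univ, and_true]
      constructor
      · rintro (⟨h1, i, hi, hqe⟩ | ⟨h1, i, hi, hqe⟩)
        · refine ⟨(q.1, i), ⟨ne_of_gt h1, hi⟩, ?_⟩
          simp only [hf, if_pos h1]
          exact Prod.ext rfl (by linear_combination -hqe)
        · refine ⟨(q.1, i), ⟨ne_of_lt h1, hi⟩, ?_⟩
          simp only [hf, if_neg (not_lt.2 (le_of_lt h1))]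
          exact Prod.ext rfl (by linear_combination hqe)
      · rintro ⟨⟨a', i⟩, ⟨ha', hi⟩, rfl⟩
        simp only [hf]
        by_cases hc : p.1 < a'
        · rw [if_pos hc]
          exact Or.inl ⟨hc, i, hi, by ring⟩
        · rw [if_neg hc]
          have ha'' : a' ≠ p.1 := ha'
          exact Or.inr ⟨lt_of_le_of_ne (not_lt.1 hc) ha'', i, hi, by ring⟩
    rw [hset, Nat.card_coe_set_eq, Set.ncard_coe_finset,
      Finset.card_image_of_injOn hDinj]
    simp only [hD, Finset.card_product, Finset.card_range,
      Finset.card_erase_of_mem (Finset.mem_univ _), Finset.card_univ, Fintype.card_fin]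
    ring
  -- part 2
  · have ht1 : t - 1 = k / r := by
      subst ht
      rw [Nat.add_div_right _ (by omega : 0 < r)]
      simp
    rw [ht1, mul_comm]
    exact Nat.div_mul_le_self k r
  -- part 3
  · intro a
    constructor
    · rw [column, Finset.card_image_of_injective _
        (fun b b' h => (Prod.ext_iff.1 h).2), Finset.card_univ, ZMod.card]
    · intro u hu v hv hadj
      simp only [column, Finset.mem_image, Finset.mem_univ, true_and] at hu hv
      obtain ⟨b, hb⟩ := hu
      obtain ⟨b', hb'⟩ := hv
      have h1 : u.1 = a := by rw [← hb]
      have h2 : v.1 = a := by rw [← hb']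
      rcases hadj with ⟨h, -⟩ | ⟨h, -⟩ <;> rw [h1, h2] at h <;> exact lt_irrefl _ h
  -- part 5
  · rintro ⟨j, v, hj, hv, hmem, hnadj⟩
    set S : Finset (Fin t × ZMod n) := Finset.image v Finset.univ with hSdef
    have hcardS : S.card = m := by
      rw [hSdef, Finset.card_image_of_injective _ hv, Finset.card_univ, Fintype.card_fin]
    have hindep : IndepIn (Gcol t r n) S := by
      intro u hu w hw
      simp only [hSdef, Finset.mem_image, Finset.mem_univ, true_and] at hu hw
      obtain ⟨i, hi⟩ := hu
      obtain ⟨i', hi'⟩ := hw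
      subst hi hi'
      by_cases h : i = i'
      · subst h; exact (Gcol t r n).loopless.irrefl _
      · exact hnadj i i' h
    obtain ⟨a, ha⟩ := key S hindep hcardS
    have hfst : ∀ i, (j i).1 = a := by
      intro i
      have h1 : v i ∈ S := Finset.mem_image_of_mem v (Finset.mem_univ i)
      have h2 := ha (v i) h1
      have h3 := hmem i
      simp only [column, Finset.mem_image, Finset.mem_univ, true_and] at h3
      obtain ⟨b, hb⟩ := h3
      rw [← h2, ← hb]
    have hinj2 : Function.Injective (fun i : Fin m => (j i).2) := by
      intro i i' h
      exact hj (Prod.ext (by rw [hfst i, hfst i']) h)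
    have hcard := Fintype.card_le_of_injective _ hinj2
    simp only [Fintype.card_fin] at hcard
    omega
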